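/- Let P, Q be fixed real numbers and define f : ℝ² → ℝ² on the set {(V_r, V_i) : V_r² + V_i² ≠ 0} by f(V_r, V_i) = ( (P·V_r + Q·V_i)/(V_r² + V_i²), (P·V_i − Q·V_r)/(V_r² + V_i²) ). Fix a point (V_r, V_i) with V_r² + V_i² ≠ 0 and let (I_r, I_i) = f(V_r, V_i). Then f is differentiable at (V_r, V_i) and its Jacobian (Fréchet derivative) at that point is the linear map given by the matrix [[−G_p, B_p], [B_p, G_p]], where G_p = (V_r·I_r − V_i·I_i)/(V_r² + V_i²) and B_p = (−V_i·I_r − I_i·V_r)/(V_r² + V_i²). -/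

import Mathlib

open Matrix

/-- The constant power load current map
`f(V_r, V_i) = ((P V_r + Q V_i)/(V_r² + V_i²), (P V_i − Q V_r)/(V_r² + V_i²))`
is differentiable at any point with `V_r² + V_i² ≠ 0`, with Jacobian
`[[−G_p, B_p], [B_p, G_p]]` where `G_p = (V_r I_r − V_i I_i)/(V_r² + V_i²)` and
`B_p = (−V_i I_r − I_i V_r)/(V_r² + V_i²)`. -/
theorem stmt9 (P Q Vr Vi : ℝ) (h : Vr ^ 2 + Vi ^ 2 ≠ 0) :
    let Ir : ℝ := (P * Vr + Q * Vi) / (Vr ^ 2 + Vi ^ 2)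
    let Ii : ℝ := (P * Vi - Q * Vr) / (Vr ^ 2 + Vi ^ 2)
    let Gp : ℝ := (Vr * Ir - Vi * Ii) / (Vr ^ 2 + Vi ^ 2)
    let Bp : ℝ := (-(Vi * Ir) - Ii * Vr) / (Vr ^ 2 + Vi ^ 2)
    HasFDerivAt
      (fun v : Fin 2 → ℝ =>
        ![(P * v 0 + Q * v 1) / (v 0 ^ 2 + v 1 ^ 2),
          (P * v 1 - Q * v 0) / (v 0 ^ 2 + v 1 ^ 2)])
      (LinearMap.toContinuousLinearMap (Matrix.mulVecLin !![-Gp, Bp; Bp, Gp]))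
      ![Vr, Vi] := by
  intro Ir Ii Gp Bp
  have hx0 : (![Vr, Vi] : Fin 2 → ℝ) 0 = Vr := rfl
  have hx1 : (![Vr, Vi] : Fin 2 → ℝ) 1 = Vi := rfl
  have hp0 : HasFDerivAt (fun v : Fin 2 → ℝ => v 0)
      (ContinuousLinearMap.proj 0 : (Fin 2 → ℝ) →L[ℝ] ℝ) ![Vr, Vi] :=
    (ContinuousLinearMap.proj 0 : (Fin 2 → ℝ) →L[ℝ] ℝ).hasFDerivAt
  have hp1 : HasFDerivAt (fun v : Fin 2 → ℝ => v 1)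
      (ContinuousLinearMap.proj 1 : (Fin 2 → ℝ) →L[ℝ] ℝ) ![Vr, Vi] :=
    (ContinuousLinearMap.proj 1 : (Fin 2 → ℝ) →L[ℝ] ℝ).hasFDerivAt
  have hden : HasFDerivAt (fun v : Fin 2 → ℝ => v 0 ^ 2 + v 1 ^ 2)
      (((2 : ℕ) * Vr ^ 1) • (ContinuousLinearMap.proj 0 : (Fin 2 → ℝ) →L[ℝ] ℝ) +
        ((2 : ℕ) * Vi ^ 1) • (ContinuousLinearMap.proj 1 : (Fin 2 → ℝ) →L[ℝ] ℝ)) ![Vr, Vi] := by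
    have := (hp0.mul hp0).add (hp1.mul hp1)
    have h2 : (fun v : Fin 2 → ℝ => v 0 * v 0 + v 1 * v 1)
        = fun v : Fin 2 → ℝ => v 0 ^ 2 + v 1 ^ 2 := by
      funext v; ring
    replace this : HasFDerivAt (fun v : Fin 2 → ℝ => v 0 * v 0 + v 1 * v 1) _ ![Vr, Vi] := this
    rw [h2] at this
    convert this using 1
    · rfl
    · rfl
    simp only [hx0, hx1]
    ext w
    simp only [ContinuousLinearMap.add_apply, ContinuousLinearMap.smul_apply,
      ContinuousLinearMap.proj_apply, smul_eq_mul]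
    ring
  have hinv : HasFDerivAt (fun v : Fin 2 → ℝ => (v 0 ^ 2 + v 1 ^ 2)⁻¹)
      ((ContinuousLinearMap.smulRight (1 : ℝ →L[ℝ] ℝ) (-((Vr ^ 2 + Vi ^ 2) ^ 2)⁻¹)).comp
        (((2 : ℕ) * Vr ^ 1) • (ContinuousLinearMap.proj 0 : (Fin 2 → ℝ) →L[ℝ] ℝ) +
          ((2 : ℕ) * Vi ^ 1) • (ContinuousLinearMap.proj 1 : (Fin 2 → ℝ) →L[ℝ] ℝ)))
      ![Vr, Vi] :=
    (hasFDerivAt_inv h).comp ![Vr, Vi] hden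
  have hnum0 : HasFDerivAt (fun v : Fin 2 → ℝ => P * v 0 + Q * v 1)
      (P • (ContinuousLinearMap.proj 0 : (Fin 2 → ℝ) →L[ℝ] ℝ) +
        Q • (ContinuousLinearMap.proj 1 : (Fin 2 → ℝ) →L[ℝ] ℝ)) ![Vr, Vi] :=
    (hp0.const_mul P).add (hp1.const_mul Q)
  have hnum1 : HasFDerivAt (fun v : Fin 2 → ℝ => P * v 1 - Q * v 0)
      (P • (ContinuousLinearMap.proj 1 : (Fin 2 → ℝ) →L[ℝ] ℝ) -
        Q • (ContinuousLinearMap.proj 0 : (Fin 2 → ℝ) →L[ℝ] ℝ)) ![Vr, Vi] :=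
    (hp1.const_mul P).sub (hp0.const_mul Q)
  have h0 := hnum0.mul hinv
  have h1 := hnum1.mul hinv
  simp only [div_eq_mul_inv]
  rw [hasFDerivAt_pi']
  intro i
  fin_cases i
  · convert h0 using 1
    · rfl
    · rfl
    apply ContinuousLinearMap.ext
    intro v
    simp only [ContinuousLinearMap.comp_apply, LinearMap.coe_toContinuousLinearMap',
      ContinuousLinearMap.proj_apply, Matrix.mulVecLin_apply, Matrix.mulVec,
      dotProduct, Fin.sum_univ_two, Matrix.cons_val', Matrix.cons_val_zero,
      Matrix.cons_val_one, Matrix.head_cons, Matrix.empty_val', Matrix.cons_val_fin_one,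
      Matrix.head_fin_const, hx0, hx1, ContinuousLinearMap.coe_smul',
      ContinuousLinearMap.coe_sub', ContinuousLinearMap.coe_add', Pi.add_apply,
      Pi.sub_apply, Pi.smul_apply, smul_eq_mul, ContinuousLinearMap.smul_apply, ContinuousLinearMap.sub_apply,
      ContinuousLinearMap.add_apply, ContinuousLinearMap.smulRight_apply, ContinuousLinearMap.one_apply]
    show -Gp * v 0 + Bp * v 1 = _
    simp only [Gp, Bp, Ir, Ii]
    field_simp
    ring
  · convert h1 using 1
    · rfl
    · rfl
    apply ContinuousLinearMap.ext
    intro v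
    simp only [ContinuousLinearMap.comp_apply, LinearMap.coe_toContinuousLinearMap',
      ContinuousLinearMap.proj_apply, Matrix.mulVecLin_apply, Matrix.mulVec,
      dotProduct, Fin.sum_univ_two, Matrix.cons_val', Matrix.cons_val_zero,
      Matrix.cons_val_one, Matrix.head_cons, Matrix.empty_val', Matrix.cons_val_fin_one,
      Matrix.head_fin_const, hx0, hx1, ContinuousLinearMap.coe_smul',
      ContinuousLinearMap.coe_sub', ContinuousLinearMap.coe_add', Pi.add_apply,
      Pi.sub_apply, Pi.smul_apply, smul_eq_mul, ContinuousLinearMap.smul_apply, ContinuousLinearMap.sub_apply,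
      ContinuousLinearMap.add_apply, ContinuousLinearMap.smulRight_apply, ContinuousLinearMap.one_apply]
    show Bp * v 0 + Gp * v 1 = _
    simp only [Gp, Bp, Ir, Ii]
    field_simp
    ring
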